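/- In 𝔽₄[x]: (i) for a positive integer k, the polynomial σ**(x^{2k}) splits over 𝔽₄ if and only if 2k ∈ {2, 4, 6}; (ii) for a natural number k, the polynomial σ**(x^{2k+1}) splits over 𝔽₄ if and only if 2k+1 = N·2^n − 1 for some natural number n and some N ∈ {1, 3}. -/

import Mathlib

open Polynomial
open scoped Classical

noncomputable section

/-- The field with four elements. -/
abbrev F4 : Type := GaloisField 2 2

/-- `D` is a unitary divisor of `S`: `D ∣ S` and `gcd(D, S / D) = 1`. -/
def IsUnitaryDivisor (D S : F4[X]) : Prop :=
  D ∣ S ∧ IsCoprime D (S / D)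

/-- The greatest common unitary divisor of `S` and `T`: a monic common unitary
divisor of `S` and `T` of maximal degree. -/
noncomputable def gcdU (S T : F4[X]) : F4[X] :=
  if h : ∃ D : F4[X], D.Monic ∧ IsUnitaryDivisor D S ∧ IsUnitaryDivisor D T ∧
      ∀ E : F4[X], E.Monic → IsUnitaryDivisor E S → IsUnitaryDivisor E T →
        E.degree ≤ D.degree
  then h.choose else 0

/-- `D` is a bi-unitary divisor of `S`: `D ∣ S` and `gcd_u(D, S / D) = 1`. -/
def IsBiunitaryDivisor (D S : F4[X]) : Prop :=
  D ∣ S ∧ gcdU D (S / D) = 1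

/-- `σ(S)`: the sum of all monic divisors of `S`. -/
noncomputable def sigma' (S : F4[X]) : F4[X] :=
  ∑ᶠ D ∈ {D : F4[X] | D.Monic ∧ D ∣ S}, D

/-- `σ**(S)`: the sum of all monic bi-unitary divisors of `S`. -/
noncomputable def sigmaBU (S : F4[X]) : F4[X] :=
  ∑ᶠ D ∈ {D : F4[X] | D.Monic ∧ IsBiunitaryDivisor D S}, D

/-- `S` is perfect if `σ(S) = S`. -/
def IsPerfect (S : F4[X]) : Prop := sigma' S = S

/-- `S` is bi-unitary perfect if `σ**(S) = S`. -/
def IsBUPerfect (S : F4[X]) : Prop := sigmaBU S = S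

/-- `ω(S)`: the number of distinct monic irreducible factors of `S`. -/
noncomputable def omegaCount (S : F4[X]) : ℕ :=
  Set.ncard {P : F4[X] | P.Monic ∧ Irreducible P ∧ P ∣ S}

/-- `Ω₁`: `P` and `P + 1` are both irreducible. -/
def Omega1 (P : F4[X]) : Prop :=
  Irreducible P ∧ Irreducible (P + 1)

/-- `Ω₂`: `P`, `P + 1`, `P³ + P + 1` and `P³ + P² + 1` are all irreducible. -/
def Omega2 (P : F4[X]) : Prop :=
  Irreducible P ∧ Irreducible (P + 1) ∧
    Irreducible (P ^ 3 + P + 1) ∧ Irreducible (P ^ 3 + P ^ 2 + 1)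

/-- A bi-unitary perfect polynomial is indecomposable if it has no proper
(monic, nontrivial) divisor which is bi-unitary perfect. -/
def IsIndecomposable (A : F4[X]) : Prop :=
  ¬ ∃ D : F4[X], D.Monic ∧ D ∣ A ∧ D ≠ 1 ∧ D ≠ A ∧ IsBUPerfect D

/-! ### Auxiliary lemmas -/

lemma X_pow_inj : Function.Injective (fun e : ℕ => (X : F4[X]) ^ e) := by
  intro i j h
  have := congrArg natDegree h
  simpa using this

lemma X_pow_div_X_pow {e m : ℕ} (h : e ≤ m) : (X : F4[X]) ^ m / X ^ e = X ^ (m - e) := by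
  rw [← pow_sub_mul_pow (X : F4[X]) h]
  exact mul_div_cancel_right₀ _ (pow_ne_zero _ X_ne_zero)

lemma monic_dvd_X_pow {D : F4[X]} {m : ℕ} (hD : D.Monic) (h : D ∣ X ^ m) :
    ∃ e ≤ m, D = X ^ e := by
  obtain ⟨e, he, hassoc⟩ := (dvd_prime_pow Polynomial.prime_X m).mp h
  exact ⟨e, he, eq_of_monic_of_associated hD (monic_X_pow e) hassoc⟩

lemma isCoprime_X_pow_X_pow (a b : ℕ) :
    IsCoprime ((X : F4[X]) ^ a) (X ^ b) ↔ a = 0 ∨ b = 0 := by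
  constructor
  · intro h
    by_contra hc
    push_neg at hc
    have h1 : (X : F4[X]) ∣ X ^ a := dvd_pow_self _ hc.1
    have h2 : (X : F4[X]) ∣ X ^ b := dvd_pow_self _ hc.2
    exact Polynomial.not_isUnit_X
      (isCoprime_self.mp ((h.of_isCoprime_of_dvd_left h1).of_isCoprime_of_dvd_right h2))
  · rintro (rfl | rfl)
    · simpa using isCoprime_one_left
    · simpa using isCoprime_one_right

lemma isUD_one (S : F4[X]) : IsUnitaryDivisor 1 S :=
  ⟨one_dvd _, isCoprime_one_left⟩

lemma isUD_self_pow (i : ℕ) : IsUnitaryDivisor ((X : F4[X]) ^ i) (X ^ i) := by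
  refine ⟨dvd_rfl, ?_⟩
  rw [X_pow_div_X_pow le_rfl]
  simpa using isCoprime_one_right

lemma isUD_X_pow_cases {E : F4[X]} {i : ℕ} (hE : E.Monic)
    (h : IsUnitaryDivisor E ((X : F4[X]) ^ i)) : E = 1 ∨ E = X ^ i := by
  obtain ⟨e, he, rfl⟩ := monic_dvd_X_pow hE h.1
  have hc := h.2
  rw [X_pow_div_X_pow he, isCoprime_X_pow_X_pow] at hc
  rcases hc with rfl | h0
  · exact Or.inl (pow_zero _)
  · right
    have : e = i := by omega
    rw [this]

lemma gcdU_X_pow_eq_one {i j : ℕ} (hij : i ≠ j ∨ i = 0) :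
    gcdU ((X : F4[X]) ^ i) (X ^ j) = 1 := by
  have key : ∀ E : F4[X], E.Monic → IsUnitaryDivisor E (X ^ i) →
      IsUnitaryDivisor E (X ^ j) → E = 1 := by
    intro E hE h1 h2
    rcases isUD_X_pow_cases hE h1 with rfl | rfl
    · rfl
    rcases isUD_X_pow_cases hE h2 with h | h
    · exact h
    · rcases hij with hij | rfl
      · exact absurd (X_pow_inj h) hij
      · exact pow_zero _
  have hex : ∃ D : F4[X], D.Monic ∧ IsUnitaryDivisor D (X ^ i) ∧ IsUnitaryDivisor D (X ^ j) ∧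
      ∀ E : F4[X], E.Monic → IsUnitaryDivisor E (X ^ i) → IsUnitaryDivisor E (X ^ j) →
        E.degree ≤ D.degree := by
    refine ⟨1, monic_one, isUD_one _, isUD_one _, ?_⟩
    intro E hE h1 h2
    rw [key E hE h1 h2]
  rw [gcdU, dif_pos hex]
  obtain ⟨hm, h1, h2, _⟩ := hex.choose_spec
  exact key _ hm h1 h2

lemma gcdU_X_pow_self_ne_one {i : ℕ} (hi : 0 < i) :
    gcdU ((X : F4[X]) ^ i) (X ^ i) ≠ 1 := by
  have hex : ∃ D : F4[X], D.Monic ∧ IsUnitaryDivisor D (X ^ i) ∧ IsUnitaryDivisor D (X ^ i) ∧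
      ∀ E : F4[X], E.Monic → IsUnitaryDivisor E (X ^ i) → IsUnitaryDivisor E (X ^ i) →
        E.degree ≤ D.degree := by
    refine ⟨X ^ i, monic_X_pow i, isUD_self_pow i, isUD_self_pow i, ?_⟩
    intro E hE h1 _
    rcases isUD_X_pow_cases hE h1 with rfl | rfl
    · rw [degree_one, degree_X_pow]
      exact_mod_cast Nat.zero_le i
    · exact le_rfl
  rw [gcdU, dif_pos hex]
  obtain ⟨hm, h1, h2, hmax⟩ := hex.choose_spec
  intro h1eq
  have := hmax (X ^ i) (monic_X_pow i) (isUD_self_pow i) (isUD_self_pow i)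
  rw [h1eq, degree_one, degree_X_pow] at this
  exact absurd this (by simp [hi.ne'])

lemma isBiUD_X_pow {m e : ℕ} (he : e ≤ m) :
    IsBiunitaryDivisor ((X : F4[X]) ^ e) (X ^ m) ↔ (2 * e ≠ m ∨ e = 0) := by
  unfold IsBiunitaryDivisor
  rw [X_pow_div_X_pow he]
  constructor
  · rintro ⟨-, hg⟩
    by_contra hc
    push_neg at hc
    obtain ⟨h2e, he0⟩ := hc
    have : m - e = e := by omega
    rw [this] at hg
    exact gcdU_X_pow_self_ne_one (Nat.pos_of_ne_zero he0) hg
  · intro h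
    refine ⟨pow_dvd_pow _ he, ?_⟩
    apply gcdU_X_pow_eq_one
    rcases h with h | h
    · left; omega
    · right; exact h

lemma sigmaBU_X_pow (m : ℕ) :
    sigmaBU ((X : F4[X]) ^ m) =
      ∑ e ∈ (Finset.range (m + 1)).filter (fun e => 2 * e ≠ m ∨ e = 0), X ^ e := by
  have hset : {D : F4[X] | D.Monic ∧ IsBiunitaryDivisor D (X ^ m)} =
      ↑(((Finset.range (m + 1)).filter (fun e => 2 * e ≠ m ∨ e = 0)).image
        (fun e => (X : F4[X]) ^ e)) := by
    ext D
    simp only [Set.mem_setOf_eq, Finset.coe_image, Set.mem_image, Finset.mem_coe,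
      Finset.mem_filter, Finset.mem_range]
    constructor
    · rintro ⟨hD, hbi⟩
      obtain ⟨e, he, rfl⟩ := monic_dvd_X_pow hD hbi.1
      exact ⟨e, ⟨Nat.lt_succ_of_le he, (isBiUD_X_pow he).mp hbi⟩, rfl⟩
    · rintro ⟨e, ⟨he, hcond⟩, rfl⟩
      exact ⟨monic_X_pow e, (isBiUD_X_pow (Nat.lt_succ_iff.mp he)).mpr hcond⟩
  rw [sigmaBU, hset, finsum_mem_coe_finset, Finset.sum_image]
  intro a _ b _ h
  exact X_pow_inj h

lemma geom_sum_mul_X_add_one (n : ℕ) :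
    (∑ i ∈ Finset.range n, (X : F4[X]) ^ i) * (X + 1) = X ^ n + 1 := by
  have := geom_sum_mul (X : F4[X]) n
  rw [CharTwo.sub_eq_add] at this
  rw [this, CharTwo.sub_eq_add]

lemma sigmaBU_odd (k : ℕ) :
    sigmaBU ((X : F4[X]) ^ (2 * k + 1)) * (X + 1) = X ^ (2 * k + 2) + 1 := by
  rw [sigmaBU_X_pow]
  have : (Finset.range (2 * k + 1 + 1)).filter (fun e => 2 * e ≠ 2 * k + 1 ∨ e = 0) =
      Finset.range (2 * k + 2) := by
    apply Finset.filter_true_of_mem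
    intro e _
    left; omega
  rw [this, geom_sum_mul_X_add_one]

lemma sigmaBU_even {k : ℕ} (hk : 0 < k) :
    sigmaBU ((X : F4[X]) ^ (2 * k)) * (X + 1) = (X ^ k + 1) * (X ^ (k + 1) + 1) := by
  rw [sigmaBU_X_pow]
  have hfil : (Finset.range (2 * k + 1)).filter (fun e => 2 * e ≠ 2 * k ∨ e = 0) =
      (Finset.range (2 * k + 1)).erase k := by
    ext e
    simp only [Finset.mem_filter, Finset.mem_erase, Finset.mem_range]
    omega
  rw [hfil, Finset.sum_erase_eq_sub (by simp [Finset.mem_range]; omega)]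
  rw [sub_mul, geom_sum_mul_X_add_one]
  have h1 : ∀ a : F4[X], -a = a := fun a => CharTwo.neg_eq a
  rw [sub_eq_add_neg, h1]
  ring_nf

lemma X_pow_add_one_ne_zero {t : ℕ} (ht : 0 < t) : ((X : F4[X]) ^ t + 1) ≠ 0 := by
  intro h
  have := congrArg (eval 0) h
  simp [zero_pow ht.ne'] at this

lemma splits_X_add_one : Splits ((X : F4[X]) + 1) := by
  apply Splits.of_degree_le_one
  calc degree ((X : F4[X]) + 1) ≤ max (degree (X : F4[X])) (degree (1 : F4[X])) :=
        degree_add_le _ _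
    _ ≤ 1 := by simp [degree_X]

noncomputable instance : Fintype F4 := Fintype.ofFinite _

lemma card_F4 : Fintype.card F4 = 4 := by
  have := GaloisField.card 2 2 (by norm_num)
  simpa using this

lemma splits_X_pow_four_sub_X : Splits ((X : F4[X]) ^ 4 - X) := by
  rw [splits_iff_card_roots]
  have h : ((X : F4[X]) ^ Fintype.card F4 - X).roots = Finset.univ.val :=
    FiniteField.roots_X_pow_card_sub_X F4
  rw [card_F4] at h
  rw [h]
  have hdeg : ((X : F4[X]) ^ 4 - X).natDegree = 4 := by
    compute_degree!
  rw [hdeg]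
  simpa using card_F4

lemma splits_X_pow_N_add_one {N : ℕ} (hN : N = 1 ∨ N = 3) :
    Splits ((X : F4[X]) ^ N + 1) := by
  rcases hN with rfl | rfl
  · rw [pow_one]; exact splits_X_add_one
  · have hne : ((X : F4[X]) ^ 4 - X) ≠ 0 := by
      have hd : ((X : F4[X]) ^ 4 - X).natDegree = 4 := by compute_degree!
      intro h
      rw [h] at hd
      simp at hd
    have hdvd : ((X : F4[X]) ^ 3 + 1) ∣ ((X : F4[X]) ^ 4 - X) := by
      refine ⟨X, ?_⟩
      have : -(X : F4[X]) = X := CharTwo.neg_eq X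
      rw [sub_eq_add_neg, this]
      ring
    exact Splits.of_dvd splits_X_pow_four_sub_X hne hdvd

lemma X_pow_mul_add_one (N n : ℕ) :
    ((X : F4[X]) ^ N + 1) ^ (2 ^ n) = X ^ (N * 2 ^ n) + 1 := by
  rw [add_pow_char_pow, one_pow, ← pow_mul]

lemma splits_X_pow_add_one_iff {t : ℕ} (ht : 0 < t) :
    Splits ((X : F4[X]) ^ t + 1) ↔
      ∃ n N : ℕ, (N = 1 ∨ N = 3) ∧ t = N * 2 ^ n := by
  constructor
  · intro hs
    set v := t.factorization 2 with hv
    set s := t / 2 ^ v with hs'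
    have hts : t = s * 2 ^ v :=
      (Nat.ordProj_mul_ordCompl_eq_self t 2).symm.trans (mul_comm _ _)
    have hodd : ¬ 2 ∣ s := Nat.not_dvd_ordCompl Nat.prime_two ht.ne'
    have hspos : 0 < s := Nat.ordCompl_pos 2 ht.ne'
    have hfact : ((X : F4[X]) ^ s + 1) ^ (2 ^ v) = X ^ t + 1 := by
      rw [X_pow_mul_add_one, ← hts]
    have hsp : Splits ((X : F4[X]) ^ s + 1) := by
      apply Splits.of_dvd hs (X_pow_add_one_ne_zero ht)
      rw [← hfact]
      exact dvd_pow_self _ (Nat.pos_of_ne_zero (by positivity)).ne'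
    -- separability
    have hsep : ((X : F4[X]) ^ s + 1).Separable := by
      have : ((X : F4[X]) ^ s - 1).Separable := by
        rw [Polynomial.X_pow_sub_one_separable_iff]
        intro hc
        rw [CharP.cast_eq_zero_iff F4 2] at hc
        exact hodd hc
      rwa [CharTwo.sub_eq_add] at this
    have hnodup := Polynomial.nodup_roots hsep
    have hcard : ((X : F4[X]) ^ s + 1).roots.card = s := by
      rw [splits_iff_card_roots] at hsp
      rw [hsp]
      exact natDegree_X_pow_add_C
    have hle : s ≤ 4 := by
      have h1 : ((X : F4[X]) ^ s + 1).roots.toFinset.card = s := by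
        rw [Multiset.toFinset_card_of_nodup hnodup, hcard]
      have h2 : ((X : F4[X]) ^ s + 1).roots.toFinset.card ≤ Fintype.card F4 :=
        le_trans (Finset.card_le_card (Finset.subset_univ _)) (le_of_eq rfl)
      rw [h1, card_F4] at h2
      exact h2
    have : s = 1 ∨ s = 3 := by
      rcases Nat.even_or_odd s with he | ho
      · exact absurd he.two_dvd hodd
      · omega
    exact ⟨v, s, this, by omega⟩
  · rintro ⟨n, N, hN, rfl⟩
    rw [← X_pow_mul_add_one]
    exact (splits_X_pow_N_add_one hN).pow _

lemma splits_sigmaBU_iff_aux {σ f : F4[X]} (hσf : σ * (X + 1) = f) (hf : f ≠ 0) :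
    Splits σ ↔ Splits f := by
  have hσ : σ ≠ 0 := by
    intro h; rw [h, zero_mul] at hσf; exact hf hσf.symm
  have hX1 : (X + 1 : F4[X]) ≠ 0 := by
    intro h
    have := congrArg (eval 0) h
    simp at this
  rw [← hσf, splits_mul hσ hX1]
  exact ⟨fun h => ⟨h, splits_X_add_one⟩, fun h => h.1⟩

lemma pow2_form_odd {k N n : ℕ} (hodd : k % 2 = 1) (h : k = N * 2 ^ n) : k = N := by
  cases n with
  | zero => simpa using h
  | succ n =>
    exfalso
    have : 2 ∣ k := ⟨N * 2 ^ n, by rw [h, pow_succ]; ring⟩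
    omega

theorem stmt7 :
    (∀ k : ℕ, 0 < k →
      (Splits ((sigmaBU (X ^ (2 * k))).map (RingHom.id F4)) ↔ 2 * k ∈ ({2, 4, 6} : Set ℕ))) ∧
    (∀ k : ℕ,
      (Splits ((sigmaBU (X ^ (2 * k + 1))).map (RingHom.id F4)) ↔
        ∃ n : ℕ, ∃ N ∈ ({1, 3} : Set ℕ), 2 * k + 1 = N * 2 ^ n - 1)) := by
  simp only [Polynomial.map_id]
  constructor
  · intro k hk
    have hne1 : ((X : F4[X]) ^ k + 1) ≠ 0 := X_pow_add_one_ne_zero hk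
    have hne2 : ((X : F4[X]) ^ (k + 1) + 1) ≠ 0 := X_pow_add_one_ne_zero (by omega)
    rw [splits_sigmaBU_iff_aux (sigmaBU_even hk) (mul_ne_zero hne1 hne2),
      splits_mul hne1 hne2, splits_X_pow_add_one_iff hk,
      splits_X_pow_add_one_iff (show 0 < k + 1 by omega)]
    simp only [Set.mem_insert_iff, Set.mem_singleton_iff]
    constructor
    · rintro ⟨⟨n, N, hN, hkN⟩, ⟨m, M, hM, hkM⟩⟩
      have hk3 : k = 1 ∨ k = 2 ∨ k = 3 := by
        rcases Nat.even_or_odd k with he | ho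
        · have h1 : (k + 1) % 2 = 1 := by
            rcases he with ⟨r, hr⟩; omega
          have := pow2_form_odd h1 hkM
          omega
        · have h1 : k % 2 = 1 := Nat.odd_iff.mp ho
          have := pow2_form_odd h1 hkN
          omega
      omega
    · intro h
      have hk3 : k = 1 ∨ k = 2 ∨ k = 3 := by omega
      rcases hk3 with rfl | rfl | rfl
      · exact ⟨⟨0, 1, Or.inl rfl, by norm_num⟩, ⟨1, 1, Or.inl rfl, by norm_num⟩⟩
      · exact ⟨⟨1, 1, Or.inl rfl, by norm_num⟩, ⟨0, 3, Or.inr rfl, by norm_num⟩⟩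
      · exact ⟨⟨0, 3, Or.inr rfl, by norm_num⟩, ⟨2, 1, Or.inl rfl, by norm_num⟩⟩
  · intro k
    rw [splits_sigmaBU_iff_aux (sigmaBU_odd k) (X_pow_add_one_ne_zero (by omega)),
      splits_X_pow_add_one_iff (show 0 < 2 * k + 2 by omega)]
    constructor
    · rintro ⟨n, N, hN, h⟩
      refine ⟨n, N, ?_, ?_⟩
      · rcases hN with rfl | rfl <;> simp
      · have h2 : 0 < 2 ^ n := pow_pos (by norm_num) n
        rcases hN with rfl | rfl <;> omega
    · rintro ⟨n, N, hNmem, h⟩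
      have hN : N = 1 ∨ N = 3 := by
        simpa [Set.mem_insert_iff, Set.mem_singleton_iff] using hNmem
      refine ⟨n, N, hN, ?_⟩
      have h2 : 0 < 2 ^ n := pow_pos (by norm_num) n
      rcases hN with rfl | rfl <;> omega
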